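/- Let ε, E, ω, α, λ be real numbers with λ ≠ 0 and ε ≠ 0, and let Φ be a real-analytic function on a neighborhood of 0 with Φ(0) ≠ 0 which satisfies the generalized Calogero–Yukawa reduced equation Φ''(x) + (2ε/x)·Φ'(x) + [2E − ω²x² − (2√2·α/x)·exp(−√2·x/λ)]·Φ(x) = 0 for all x in some interval (0, δ) with δ > 0. Then the energy is determined by the values of Φ and Φ'' at the singular point x = 0: E = (2α²/ε − 2α/λ) − (2ε+1)·Φ''(0)/(2·Φ(0)). -/

import Mathlib

/-- Calogero model with Yukawa-like interaction: for an analytic solution `Φ` of the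
reduced equation with `Φ 0 ≠ 0`, the energy is determined by `Φ 0` and `Φ'' 0`:
`E = (2α²/ε − 2α/λ) − (2ε+1)·Φ''(0)/(2·Φ(0))`. -/
theorem calogero_yukawa_energy_formula
    (ε E ω α lam : ℝ) (hlam : lam ≠ 0) (hε : ε ≠ 0)
    (Φ : ℝ → ℝ) (hA : AnalyticAt ℝ Φ 0) (h0 : Φ 0 ≠ 0)
    (δ : ℝ) (hδ : 0 < δ)
    (hODE : ∀ x ∈ Set.Ioo (0 : ℝ) δ,
      deriv (deriv Φ) x + (2 * ε / x) * deriv Φ x +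
        (2 * E - ω ^ 2 * x ^ 2
          - (2 * Real.sqrt 2 * α / x) * Real.exp (-Real.sqrt 2 * x / lam)) * Φ x = 0) :
    E = (2 * α ^ 2 / ε - 2 * α / lam)
        - (2 * ε + 1) * deriv (deriv Φ) 0 / (2 * Φ 0) := by
  set s2 := Real.sqrt 2 with hs2
  have hs2sq : s2 ^ 2 = 2 := Real.sq_sqrt (by norm_num)
  -- analyticity of derivatives
  have hsA : AnalyticOnNhd ℝ Φ {y | AnalyticAt ℝ Φ y} := fun x hx => hx
  have hA1 : AnalyticAt ℝ (deriv Φ) 0 := hsA.deriv 0 hA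
  have hA2 : AnalyticAt ℝ (deriv (deriv Φ)) 0 := by
    have h : AnalyticOnNhd ℝ (deriv Φ) {y | AnalyticAt ℝ (deriv Φ) y} := fun x hx => hx
    exact h.deriv 0 hA1
  -- the regularized function F
  set F : ℝ → ℝ := fun x => x * deriv (deriv Φ) x + 2 * ε * deriv Φ x +
      (2 * E * x - ω ^ 2 * x ^ 3 - 2 * s2 * α * Real.exp (-(s2 * x) / lam)) * Φ x with hF
  have hFA : AnalyticAt ℝ F 0 := by
    apply AnalyticAt.add
    apply AnalyticAt.add
    · exact (analyticAt_id).mul hA2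
    · exact (analyticAt_const).mul hA1
    · refine AnalyticAt.mul ?_ hA
      refine AnalyticAt.sub (AnalyticAt.sub ?_ ?_) ?_
      · exact (analyticAt_const).mul analyticAt_id
      · exact (analyticAt_const).mul (analyticAt_id.pow 3)
      · refine (analyticAt_const).mul (AnalyticAt.rexp ?_)
        exact ((analyticAt_const.mul analyticAt_id).neg).div analyticAt_const hlam
  -- F vanishes on (0, δ)
  have hFzero : ∀ x ∈ Set.Ioo (0 : ℝ) δ, F x = 0 := by
    intro x hx
    have hx0 : x ≠ 0 := ne_of_gt hx.1
    have h := hODE x hx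
    simp only [hF]
    field_simp at h
    have he : Real.exp (-(s2 * x) / lam) = Real.exp (-(x * s2 / lam)) := by congr 1; ring
    linear_combination h + (-2 * s2 * α * Φ x) * he
  -- hence F vanishes in a neighborhood of 0
  have hFev : F =ᶠ[nhds 0] fun _ => (0 : ℝ) := by
    rcases hFA.eventually_eq_zero_or_eventually_ne_zero with h | h
    · exact h
    · exfalso
      have h1 : ∀ᶠ x in nhdsWithin 0 (Set.Ioi 0), F x ≠ 0 :=
        h.filter_mono (nhdsWithin_mono 0 (fun x hx => ne_of_gt hx))
      have h2 : ∀ᶠ x in nhdsWithin 0 (Set.Ioi 0), F x = 0 :=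
        Filter.eventually_of_mem (Ioo_mem_nhdsGT_of_mem ⟨le_refl 0, hδ⟩) hFzero
      rcases (h1.and h2).exists with ⟨x, hne, heq⟩
      exact hne heq
  have hF0 : F 0 = 0 := hFev.self_of_nhds
  have hF'0 : deriv F 0 = 0 := by
    have h := hFev.deriv_eq
    rw [h, deriv_const]
  -- compute deriv F 0 by hand
  have hΦd : HasDerivAt Φ (deriv Φ 0) 0 := hA.differentiableAt.hasDerivAt
  have hdΦd : HasDerivAt (deriv Φ) (deriv (deriv Φ) 0) 0 := hA1.differentiableAt.hasDerivAt
  have hddΦd : HasDerivAt (deriv (deriv Φ)) (deriv (deriv (deriv Φ)) 0) 0 :=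
    hA2.differentiableAt.hasDerivAt
  have hinner : HasDerivAt (fun x : ℝ => -(s2 * x) / lam) (-s2 / lam) 0 := by
    have h1 : HasDerivAt (fun x : ℝ => -s2 / lam * x) (-s2 / lam) 0 := by
      simpa using (hasDerivAt_id (0 : ℝ)).const_mul (-s2 / lam)
    exact h1.congr_of_eventuallyEq (Filter.Eventually.of_forall fun y => by ring)
  have hexp : HasDerivAt (fun x : ℝ => Real.exp (-(s2 * x) / lam))
      (Real.exp (-(s2 * 0) / lam) * (-s2 / lam)) 0 := hinner.exp
  have e1 := (hasDerivAt_id (0 : ℝ)).mul hddΦd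
  have e2 := hdΦd.const_mul (2 * ε)
  have e3 := (hasDerivAt_id (0 : ℝ)).const_mul (2 * E)
  have e4 := (hasDerivAt_pow 3 (0 : ℝ)).const_mul (ω ^ 2)
  have e5 := hexp.const_mul (2 * s2 * α)
  have e6 := ((e3.sub e4).sub e5).mul hΦd
  have hbig := (e1.add e2).add e6
  have hFd : HasDerivAt F
      ((2 * ε + 1) * deriv (deriv Φ) 0 + (2 * E + 2 * s2 * α * (s2 / lam)) * Φ 0
        - 2 * s2 * α * deriv Φ 0) 0 := by
    refine hbig.congr_deriv ?_
    norm_num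
    ring
  have rel2 : (2 * ε + 1) * deriv (deriv Φ) 0 + (2 * E + 2 * s2 * α * (s2 / lam)) * Φ 0
      - 2 * s2 * α * deriv Φ 0 = 0 := by
    rw [← hFd.deriv]; exact hF'0
  -- the first algebraic relation, from F 0 = 0
  have rel1 : 2 * ε * deriv Φ 0 - 2 * s2 * α * Φ 0 = 0 := by
    have h : F 0 = 2 * ε * deriv Φ 0 - 2 * s2 * α * Φ 0 := by
      simp [hF]
      ring
    rw [h] at hF0
    exact hF0
  -- conclude
  have hΦ'0 : deriv Φ 0 = s2 * α * Φ 0 / ε := by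
    field_simp
    linarith
  rw [hΦ'0] at rel2
  have key : (2 * ε + 1) * deriv (deriv Φ) 0 + (2 * E + 4 * α / lam) * Φ 0
      - 4 * α ^ 2 / ε * Φ 0 = 0 := by
    field_simp at rel2 ⊢
    linear_combination rel2 - (2 * α * Φ 0 * ε - 2 * α ^ 2 * Φ 0 * lam) * hs2sq
  field_simp at key ⊢
  linear_combination key
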